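/- arXiv:1711.00488 — 3 statements merged into one kernel-verified Lean document; each statement's English description precedes it below -/
import Mathlib

section
/- For n ≥ 4, the graph L(n) is connected with diameter 3. -/
set_option linter.unusedVariables false

open SimpleGraph Finset

/-- Vertices of `H(n)`: subsets of `[n]` of size 1 or 2. -/
def HV (n : ℕ) := {s : Finset (Fin n) // s.card = 1 ∨ s.card = 2}

instance (n : ℕ) : DecidableEq (HV n) := Subtype.instDecidableEq
instance (n : ℕ) : Fintype (HV n) := Subtype.fintype _

/-- The graph `H(n)`: adjacency is strict inclusion. -/
def Hgraph (n : ℕ) : SimpleGraph (HV n) where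
  Adj x y := x.1 ⊂ y.1 ∨ y.1 ⊂ x.1
  symm := ⟨fun x y h => h.symm⟩
  loopless := ⟨fun x h => (ssubset_irrefl x.1) (h.elim id id)⟩

instance (n : ℕ) : DecidableRel (Hgraph n).Adj :=
  fun x y => inferInstanceAs (Decidable (_ ∨ _))

noncomputable instance (n : ℕ) : DecidableRel ((Hgraph n).lineGraph).Adj :=
  Classical.decRel _

def Hv1 {n : ℕ} (i : Fin n) : HV n := ⟨{i}, Or.inl (Finset.card_singleton i)⟩

def Hv2 {n : ℕ} (i j : Fin n) (h : i ≠ j) : HV n := ⟨{i, j}, Or.inr (Finset.card_pair h)⟩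

lemma Hadj12 {n : ℕ} (i j : Fin n) (h : i ≠ j) : (Hgraph n).Adj (Hv1 i) (Hv2 i j h) :=
  Or.inl (Finset.ssubset_iff_subset_ne.mpr ⟨by simp [Hv1, Hv2, Finset.singleton_subset_iff], by
    simp only [Hv1, Hv2]
    intro he
    apply h
    have : j ∈ ({i} : Finset (Fin n)) := by rw [he]; simp
    simpa [eq_comm] using this⟩)

/-- The vertex `[i, ij]` of the line graph `L(n)`, i.e. the edge `{{i},{i,j}}` of `H(n)`. -/
def edgeV {n : ℕ} (i j : Fin n) (h : i ≠ j) : (Hgraph n).edgeSet :=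
  ⟨s(Hv1 i, Hv2 i j h), (Hgraph n).mem_edgeSet.mpr (Hadj12 i j h)⟩

def permMap {n : ℕ} (α : Equiv.Perm (Fin n)) (s : HV n) : HV n :=
  ⟨s.1.image α, by rw [Finset.card_image_of_injective _ α.injective]; exact s.2⟩

def permHom {n : ℕ} (α : Equiv.Perm (Fin n)) : Hgraph n →g Hgraph n where
  toFun := permMap α
  map_rel' := by
    intro x y hxy
    rcases hxy with h | h
    · exact Or.inl ((Finset.image_ssubset_image α.injective).mpr h)
    · exact Or.inr ((Finset.image_ssubset_image α.injective).mpr h)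

/-- The map induced by a permutation `α` of `[n]` on the vertices of the line graph `L(n)`. -/
def permEdge {n : ℕ} (α : Equiv.Perm (Fin n)) :
    (Hgraph n).edgeSet → (Hgraph n).edgeSet :=
  (permHom α).mapEdgeSet

lemma pair_eq_pair {α : Type*} [DecidableEq α] {i j k l : α} (hij : i ≠ j) :
    ({i, j} : Finset α) = {k, l} ↔ (i = k ∧ j = l) ∨ (i = l ∧ j = k) := by
  constructor
  · intro h
    have hi : i ∈ ({k, l} : Finset α) := by rw [← h]; simp
    have hj : j ∈ ({k, l} : Finset α) := by rw [← h]; simp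
    have hk : k ∈ ({i, j} : Finset α) := by rw [h]; simp
    have hl : l ∈ ({i, j} : Finset α) := by rw [h]; simp
    simp only [Finset.mem_insert, Finset.mem_singleton] at hi hj hk hl
    rcases hi with hi | hi <;> rcases hj with hj | hj <;> tauto
  · rintro (⟨rfl, rfl⟩ | ⟨rfl, rfl⟩)
    · rfl
    · exact Finset.pair_comm i j

lemma Hv1_eq_iff {n : ℕ} {i k : Fin n} : Hv1 i = Hv1 k ↔ i = k := by
  rw [show Hv1 i = Hv1 k ↔ (Hv1 i).1 = (Hv1 k).1 from Subtype.ext_iff]; simp [Hv1]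

lemma Hv1_ne_Hv2 {n : ℕ} {i k l : Fin n} (h : k ≠ l) : Hv1 i ≠ Hv2 k l h := by
  intro he
  have := congrArg (fun s : HV n => s.1.card) he
  simp [Hv1, Hv2, Finset.card_pair h] at this

lemma Hv2_eq_iff {n : ℕ} {i j k l : Fin n} (hij : i ≠ j) (hkl : k ≠ l) :
    Hv2 i j hij = Hv2 k l hkl ↔ (i = k ∧ j = l) ∨ (i = l ∧ j = k) := by
  rw [show Hv2 i j hij = Hv2 k l hkl ↔ (Hv2 i j hij).1 = (Hv2 k l hkl).1 from Subtype.ext_iff]; exact pair_eq_pair hij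

lemma edgeV_eq_iff {n : ℕ} {i j k l : Fin n} (hij : i ≠ j) (hkl : k ≠ l) :
    edgeV i j hij = edgeV k l hkl ↔ i = k ∧ j = l := by
  rw [Subtype.ext_iff]
  show s(Hv1 i, Hv2 i j hij) = s(Hv1 k, Hv2 k l hkl) ↔ _
  rw [Sym2.eq_iff]
  constructor
  · rintro (⟨h1, h2⟩ | ⟨h1, h2⟩)
    · have hik := Hv1_eq_iff.mp h1
      rcases (Hv2_eq_iff hij hkl).mp h2 with ⟨h3, h4⟩ | ⟨h3, h4⟩
      · exact ⟨hik, h4⟩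
      · exact absurd (hik.symm.trans h3 ▸ h4) (by rw [hik] at hij; omega)
    · exact absurd h1 (Hv1_ne_Hv2 hkl)
  · rintro ⟨rfl, rfl⟩; exact Or.inl ⟨rfl, rfl⟩

lemma ssub_rep {n : ℕ} {x y : HV n} (h : x.1 ⊂ y.1) :
    ∃ i j, ∃ (hij : i ≠ j), x = Hv1 i ∧ y = Hv2 i j hij := by
  have hc := Finset.card_lt_card h
  have hx1 : x.1.card = 1 := by rcases x.2 with h1 | h1 <;> rcases y.2 with h2 | h2 <;> omega
  have hy2 : y.1.card = 2 := by rcases y.2 with h2 | h2 <;> omega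
  obtain ⟨i, hi⟩ := Finset.card_eq_one.mp hx1
  obtain ⟨a, b, hab, hy⟩ := Finset.card_eq_two.mp hy2
  have hiy : i ∈ y.1 := h.subset (by rw [hi]; simp)
  rw [hy] at hiy
  simp only [Finset.mem_insert, Finset.mem_singleton] at hiy
  rcases hiy with rfl | rfl
  · exact ⟨i, b, hab, Subtype.ext hi, Subtype.ext hy⟩
  · exact ⟨i, a, fun h' => hab h'.symm, Subtype.ext hi,
      Subtype.ext (hy.trans (Finset.pair_comm a i))⟩
  
lemma edge_rep {n : ℕ} (e : (Hgraph n).edgeSet) : ∃ i j, ∃ (hij : i ≠ j), e = edgeV i j hij := by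
  obtain ⟨e, he⟩ := e
  induction e using Sym2.ind with
  | _ x y =>
    rw [SimpleGraph.mem_edgeSet] at he
    rcases he with h | h
    · obtain ⟨i, j, hij, rfl, rfl⟩ := ssub_rep h
      exact ⟨i, j, hij, rfl⟩
    · obtain ⟨i, j, hij, rfl, rfl⟩ := ssub_rep h
      exact ⟨i, j, hij, Subtype.ext (Sym2.eq_swap)⟩

lemma adj_edgeV_iff {n : ℕ} {i j k l : Fin n} (hij : i ≠ j) (hkl : k ≠ l) :
    ((Hgraph n).lineGraph).Adj (edgeV i j hij) (edgeV k l hkl) ↔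
      (i = k ∧ j ≠ l) ∨ (i = l ∧ j = k) := by
  rw [SimpleGraph.lineGraph_adj_iff_exists]
  have hmem : ∀ (v : HV n), (v ∈ (edgeV i j hij : Sym2 (HV n)) ∧ v ∈ (edgeV k l hkl : Sym2 (HV n)))
      ↔ ((v = Hv1 i ∨ v = Hv2 i j hij) ∧ (v = Hv1 k ∨ v = Hv2 k l hkl)) := by
    intro v
    show (v ∈ s(Hv1 i, Hv2 i j hij) ∧ v ∈ s(Hv1 k, Hv2 k l hkl)) ↔ _
    rw [Sym2.mem_iff, Sym2.mem_iff]
  constructor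
  · rintro ⟨hne, v, hv⟩
    rw [hmem] at hv
    have hne' : ¬(i = k ∧ j = l) := fun hc => hne ((edgeV_eq_iff hij hkl).mpr hc)
    rcases hv with ⟨h1 | h1, h2 | h2⟩
    · subst h1
      have := Hv1_eq_iff.mp h2
      exact Or.inl ⟨this, fun hjl => hne' ⟨this, hjl⟩⟩
    · subst h1; exact absurd h2 (Hv1_ne_Hv2 hkl)
    · subst h1; exact absurd h2.symm (Hv1_ne_Hv2 hij)
    · subst h1
      rcases (Hv2_eq_iff hij hkl).mp h2 with ⟨h3, h4⟩ | ⟨h3, h4⟩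
      · exact Or.inl ⟨h3, fun hjl => hne' ⟨h3, hjl⟩⟩
      · exact Or.inr ⟨h3, h4⟩
  · rintro (⟨rfl, hjl⟩ | ⟨rfl, rfl⟩)
    · refine ⟨fun hc => hjl ((edgeV_eq_iff hij hkl).mp hc).2, Hv1 i, (hmem _).mpr ?_⟩
      exact ⟨Or.inl rfl, Or.inl rfl⟩
    · refine ⟨fun hc => hij ((edgeV_eq_iff hij hkl).mp hc).1, Hv2 i j hij, (hmem _).mpr ?_⟩
      exact ⟨Or.inr rfl, Or.inr ((Hv2_eq_iff hij hkl).mpr (Or.inr ⟨rfl, rfl⟩))⟩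

lemma edist_le_three {n : ℕ} (e f : (Hgraph n).edgeSet) :
    ((Hgraph n).lineGraph).edist e f ≤ 3 := by
  obtain ⟨i, j, hij, rfl⟩ := edge_rep e
  obtain ⟨k, l, hkl, rfl⟩ := edge_rep f
  by_cases hik : i = k
  · by_cases hjl : j = l
    · subst hik; subst hjl; rw [SimpleGraph.edist_self]; norm_num
    · have h1 : ((Hgraph n).lineGraph).Adj (edgeV i j hij) (edgeV k l hkl) :=
        (adj_edgeV_iff hij hkl).mpr (Or.inl ⟨hik, hjl⟩)
      exact le_trans (SimpleGraph.edist_le h1.toWalk) (by norm_num)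
  · by_cases hjk : j = k
    · by_cases hil : i = l
      · have h1 : ((Hgraph n).lineGraph).Adj (edgeV i j hij) (edgeV k l hkl) :=
          (adj_edgeV_iff hij hkl).mpr (Or.inr ⟨hil, hjk⟩)
        exact le_trans (SimpleGraph.edist_le h1.toWalk) (by norm_num)
      · have h1 : ((Hgraph n).lineGraph).Adj (edgeV i j hij) (edgeV j i hij.symm) :=
          (adj_edgeV_iff hij hij.symm).mpr (Or.inr ⟨rfl, rfl⟩)
        have h2 : ((Hgraph n).lineGraph).Adj (edgeV j i hij.symm) (edgeV k l hkl) :=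
          (adj_edgeV_iff hij.symm hkl).mpr (Or.inl ⟨hjk, hil⟩)
        refine le_trans (SimpleGraph.edist_le (Walk.cons h1 (Walk.cons h2 Walk.nil))) ?_
        simp
        norm_num
    · by_cases hil : i = l
      · have h1 : ((Hgraph n).lineGraph).Adj (edgeV i j hij) (edgeV i k hik) :=
          (adj_edgeV_iff hij hik).mpr (Or.inl ⟨rfl, hjk⟩)
        have h2 : ((Hgraph n).lineGraph).Adj (edgeV i k hik) (edgeV k l hkl) :=
          (adj_edgeV_iff hik hkl).mpr (Or.inr ⟨hil, rfl⟩)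
        refine le_trans (SimpleGraph.edist_le (Walk.cons h1 (Walk.cons h2 Walk.nil))) ?_
        simp
        norm_num
      · have h1 : ((Hgraph n).lineGraph).Adj (edgeV i j hij) (edgeV i k hik) :=
          (adj_edgeV_iff hij hik).mpr (Or.inl ⟨rfl, hjk⟩)
        have h2 : ((Hgraph n).lineGraph).Adj (edgeV i k hik) (edgeV k i (Ne.symm hik)) :=
          (adj_edgeV_iff hik (Ne.symm hik)).mpr (Or.inr ⟨rfl, rfl⟩)
        have h3 : ((Hgraph n).lineGraph).Adj (edgeV k i (Ne.symm hik)) (edgeV k l hkl) :=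
          (adj_edgeV_iff (Ne.symm hik) hkl).mpr (Or.inl ⟨rfl, hil⟩)
        refine le_trans
          (SimpleGraph.edist_le (Walk.cons h1 (Walk.cons h2 (Walk.cons h3 Walk.nil)))) ?_
        simp

lemma walk_len_ge {V : Type*} {G : SimpleGraph V} {u v : V} (hne : u ≠ v)
    (hadj : ¬ G.Adj u v) (hcommon : ∀ w, ¬(G.Adj u w ∧ G.Adj w v)) (p : G.Walk u v) :
    3 ≤ p.length := by
  cases p with
  | nil => exact absurd rfl hne
  | cons h q =>
    rename_i w
    cases q with
    | nil => exact absurd h hadj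
    | cons h' q' =>
      rename_i w'
      cases q' with
      | nil => exact absurd ⟨h, h'⟩ (hcommon _)
      | cons h'' q'' => simp only [SimpleGraph.Walk.length_cons]; omega

lemma three_le_edist {n : ℕ} (hn : 4 ≤ n) :
    ∃ u v : (Hgraph n).edgeSet, 3 ≤ ((Hgraph n).lineGraph).edist u v := by
  have h0 : (0 : ℕ) < n := by omega
  set a : Fin n := ⟨0, by omega⟩
  set b : Fin n := ⟨1, by omega⟩
  set c : Fin n := ⟨2, by omega⟩
  have hab : a ≠ b := by simp [a, b, Fin.ext_iff]
  have hcb : c ≠ b := by simp [c, b, Fin.ext_iff]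
  refine ⟨edgeV a b hab, edgeV c b hcb, ?_⟩
  have hne : edgeV a b hab ≠ edgeV c b hcb := by
    rw [Ne, edgeV_eq_iff]
    simp [a, c, Fin.ext_iff]
  have hadj : ¬ ((Hgraph n).lineGraph).Adj (edgeV a b hab) (edgeV c b hcb) := by
    rw [adj_edgeV_iff]
    simp [a, b, c, Fin.ext_iff]
  have hcommon : ∀ w : (Hgraph n).edgeSet,
      ¬(((Hgraph n).lineGraph).Adj (edgeV a b hab) w ∧
        ((Hgraph n).lineGraph).Adj w (edgeV c b hcb)) := by
    rintro w ⟨h1, h2⟩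
    obtain ⟨i, j, hij, rfl⟩ := edge_rep w
    rw [adj_edgeV_iff] at h1 h2
    have hij' : i.val ≠ j.val := fun h => hij (Fin.ext h)
    simp only [Fin.ext_iff] at h1 h2
    simp only [a, b, c] at h1 h2
    omega
  rw [SimpleGraph.edist_eq_sInf]
  apply le_sInf
  rintro _ ⟨p, rfl⟩
  show (3:ℕ∞) ≤ (p.length : ℕ∞)
  exact_mod_cast walk_len_ge hne hadj hcommon p


/-- For `n ≥ 4`, the graph `L(n)` is connected with diameter 3. -/
theorem lineGraph_connected_diam (n : ℕ) (hn : 4 ≤ n) :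
    ((Hgraph n).lineGraph).Connected ∧ ((Hgraph n).lineGraph).diam = 3 := by
  
  have hab : (⟨0, by omega⟩ : Fin n) ≠ ⟨1, by omega⟩ := by simp [Fin.ext_iff]
  have hconn : ((Hgraph n).lineGraph).Connected := by
    haveI : Nonempty ((Hgraph n).edgeSet) := ⟨edgeV _ _ hab⟩
    refine ⟨fun u v => SimpleGraph.reachable_of_edist_ne_top ?_⟩
    intro h
    have := edist_le_three u v
    rw [h] at this
    exact (by norm_num : ¬(⊤ : ℕ∞) ≤ 3) this
  refine ⟨hconn, ?_⟩
  have hediam : ((Hgraph n).lineGraph).ediam = 3 := by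
    obtain ⟨u, v, huv⟩ := three_le_edist hn
    exact le_antisymm (SimpleGraph.ediam_le_of_edist_le fun u v => edist_le_three u v)
      (le_trans huv SimpleGraph.edist_le_ediam)
  rw [SimpleGraph.diam, hediam]
  rfl
end

section
/- For n ≥ 2, the graph L(n) is vertex-transitive. -/
set_option linter.unusedVariables false

open SimpleGraph Finset

/-- A permutation induces an equivalence on `HV n`. -/
def permEquiv {n : ℕ} (α : Equiv.Perm (Fin n)) : HV n ≃ HV n where
  toFun := permMap α
  invFun := permMap α.symm
  left_inv s := by
    apply Subtype.ext
    simp [permMap, Finset.image_image, Function.comp]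
  right_inv s := by
    apply Subtype.ext
    simp [permMap, Finset.image_image, Function.comp]

/-- A permutation induces a graph automorphism of `H(n)`. -/
def permIso {n : ℕ} (α : Equiv.Perm (Fin n)) : Hgraph n ≃g Hgraph n where
  toEquiv := permEquiv α
  map_rel_iff' := by
    intro x y
    constructor
    · intro h
      rcases h with h | h
      · exact Or.inl ((Finset.image_ssubset_image α.injective).mp h)
      · exact Or.inr ((Finset.image_ssubset_image α.injective).mp h)
    · exact (permHom α).map_rel'

/-- A graph automorphism induces an automorphism of the line graph. -/
def lineIso {V : Type*} {G : SimpleGraph V} (f : G ≃g G) : G.lineGraph ≃g G.lineGraph where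
  toEquiv := f.mapEdgeSet
  map_rel_iff' := by
    intro e₁ e₂
    simp only [SimpleGraph.lineGraph_adj_iff_exists]
    constructor
    · rintro ⟨hne, v, hv1, hv2⟩
      refine ⟨fun he => hne (by rw [he]), f.symm v, ?_, ?_⟩
      · have : v ∈ (↑(f.mapEdgeSet e₁) : Sym2 V) := hv1
        simp only [Iso.mapEdgeSet, Hom.mapEdgeSet, Equiv.coe_fn_mk] at this
        rw [Sym2.mem_map] at this
        obtain ⟨a, ha, hav⟩ := this
        have : f.symm v = a := by rw [← hav]; simp
        rwa [this]
      · have : v ∈ (↑(f.mapEdgeSet e₂) : Sym2 V) := hv2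
        simp only [Iso.mapEdgeSet, Hom.mapEdgeSet, Equiv.coe_fn_mk] at this
        rw [Sym2.mem_map] at this
        obtain ⟨a, ha, hav⟩ := this
        have : f.symm v = a := by rw [← hav]; simp
        rwa [this]
    · rintro ⟨hne, v, hv1, hv2⟩
      refine ⟨fun he => hne (f.mapEdgeSet.injective he), f v, ?_, ?_⟩
      · show f v ∈ (↑(f.mapEdgeSet e₁) : Sym2 V)
        simp only [Iso.mapEdgeSet, Hom.mapEdgeSet, Equiv.coe_fn_mk]
        rw [Sym2.mem_map]
        exact ⟨v, hv1, rfl⟩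
      · show f v ∈ (↑(f.mapEdgeSet e₂) : Sym2 V)
        simp only [Iso.mapEdgeSet, Hom.mapEdgeSet, Equiv.coe_fn_mk]
        rw [Sym2.mem_map]
        exact ⟨v, hv2, rfl⟩

lemma permMap_Hv1 {n : ℕ} (α : Equiv.Perm (Fin n)) (i : Fin n) :
    permMap α (Hv1 i) = Hv1 (α i) := by
  apply Subtype.ext; simp [permMap, Hv1]

lemma permMap_Hv2 {n : ℕ} (α : Equiv.Perm (Fin n)) (i j : Fin n) (h : i ≠ j) :
    permMap α (Hv2 i j h) = Hv2 (α i) (α j) (fun he => h (α.injective he)) := by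
  apply Subtype.ext; simp [permMap, Hv2, Finset.image_insert]

lemma lineIso_edgeV {n : ℕ} (α : Equiv.Perm (Fin n)) (i j : Fin n) (h : i ≠ j) :
    (lineIso (permIso α)) (edgeV i j h)
      = edgeV (α i) (α j) (fun he => h (α.injective he)) := by
  apply Subtype.ext
  show Sym2.map (permMap α) s(Hv1 i, Hv2 i j h) = _
  rw [Sym2.map_pair_eq, permMap_Hv1, permMap_Hv2]
  rfl

lemma edge_aux {n : ℕ} (x y : HV n) (hss : x.1 ⊂ y.1) :
    ∃ (i j : Fin n) (h : i ≠ j), x = Hv1 i ∧ y = Hv2 i j h := by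
  have hlt := Finset.card_lt_card hss
  have hx1 : x.1.card = 1 := by rcases x.2 with h1 | h2; · exact h1
                                · rcases y.2 with hy1 | hy2 <;> omega
  have hy2 : y.1.card = 2 := by rcases y.2 with hy1 | hy2; · omega
                                · exact hy2
  obtain ⟨i, hi⟩ := Finset.card_eq_one.mp hx1
  obtain ⟨a, b, hab, hy⟩ := Finset.card_eq_two.mp hy2
  have hisub : i ∈ y.1 := hss.1 (by rw [hi]; simp)
  rw [hy] at hisub
  simp only [Finset.mem_insert, Finset.mem_singleton] at hisub
  rcases hisub with rfl | rfl
  · refine ⟨i, b, hab, Subtype.ext hi, Subtype.ext (by rw [hy]; rfl)⟩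
  · refine ⟨i, a, fun h => hab h.symm, Subtype.ext hi, Subtype.ext (by rw [hy, Finset.pair_comm]; rfl)⟩

/-- Every edge of `H(n)` has the form `edgeV i j h`. -/
lemma edge_form {n : ℕ} (u : (Hgraph n).edgeSet) :
    ∃ (i j : Fin n) (h : i ≠ j), u = edgeV i j h := by
  obtain ⟨e, he⟩ := u
  induction e with
  | h x y =>
    rw [SimpleGraph.mem_edgeSet] at he
    rcases he with hss | hss
    · obtain ⟨i, j, h, hx, hy⟩ := edge_aux x y hss
      exact ⟨i, j, h, Subtype.ext (by subst hx hy; rfl)⟩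
    · obtain ⟨i, j, h, hy, hx⟩ := edge_aux y x hss
      exact ⟨i, j, h, Subtype.ext (by subst hx hy; exact Sym2.eq_swap)⟩

/-- A permutation sending `i ↦ k` and `j ↦ l`. -/
lemma exists_perm {n : ℕ} (i j k l : Fin n) (hij : i ≠ j) (hkl : k ≠ l) :
    ∃ α : Equiv.Perm (Fin n), α i = k ∧ α j = l := by
  set β := Equiv.swap i k with hβ
  have hβi : β i = k := Equiv.swap_apply_left i k
  have hβjk : β j ≠ k := by
    intro h
    have : β j = β i := by rw [h, hβi]
    exact hij (β.injective this).symm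
  refine ⟨β.trans (Equiv.swap (β j) l), ?_, ?_⟩
  · show Equiv.swap (β j) l (β i) = k
    rw [hβi, Equiv.swap_apply_of_ne_of_ne hβjk.symm hkl]
  · show Equiv.swap (β j) l (β j) = l
    exact Equiv.swap_apply_left _ _

/-- For `n ≥ 2`, the graph `L(n)` is vertex-transitive. -/
theorem lineGraph_vertex_transitive (n : ℕ) (hn : 2 ≤ n) :
    ∀ u v : (Hgraph n).edgeSet, ∃ g : (Hgraph n).lineGraph ≃g (Hgraph n).lineGraph, g u = v := by
  intro u v
  obtain ⟨i, j, hij, rfl⟩ := edge_form u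
  obtain ⟨k, l, hkl, rfl⟩ := edge_form v
  obtain ⟨α, hik, hjl⟩ := exists_perm i j k l hij hkl
  refine ⟨lineIso (permIso α), ?_⟩
  rw [lineIso_edgeV]
  apply Subtype.ext
  show (↑(edgeV (α i) (α j) _) : Sym2 (HV n)) = ↑(edgeV k l hkl)
  subst hik hjl
  rfl
end

section
/- The subgroup H = {f_α : α ∈ Sym([n]), α(1) = 1} of Aut(L(n)) has exactly three orbits on the vertices of L(n), namely O_1 = {[1,1i] : 2 ≤ i ≤ n}, O_2 = {[i,1i] : 2 ≤ i ≤ n}, and O_3 = {[i,ij] : i,j ∈ {2,...,n}, i ≠ j}. -/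
set_option linter.unusedVariables false

open SimpleGraph Finset

lemma edgeV_congr {n : ℕ} {i j i' j' : Fin n} (h : i ≠ j) (h' : i' ≠ j')
    (hii : i = i') (hjj : j = j') : edgeV i j h = edgeV i' j' h' := by
  subst hii; subst hjj; rfl

lemma edgeV_inj {n : ℕ} {i j i' j' : Fin n} {h : i ≠ j} {h' : i' ≠ j'}
    (he : edgeV i j h = edgeV i' j' h') : i = i' ∧ j = j' := by
  have h1 : s(Hv1 i, Hv2 i j h) = s(Hv1 i', Hv2 i' j' h') := congrArg Subtype.val he
  rw [Sym2.eq_iff] at h1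
  rcases h1 with ⟨ha, hb⟩ | ⟨ha, hb⟩
  · have hii : i = i' := by
      have := congrArg Subtype.val ha
      simpa [Hv1] using this
    subst hii
    have hset : ({i, j} : Finset (Fin n)) = {i, j'} := by
      have := congrArg Subtype.val hb
      simpa [Hv2] using this
    have hj : j ∈ ({i, j'} : Finset (Fin n)) := hset ▸ (by simp)
    simp only [Finset.mem_insert, Finset.mem_singleton] at hj
    rcases hj with hj | hj
    · exact absurd hj.symm h
    · exact ⟨rfl, hj⟩
  · exfalso
    have hset : ({i} : Finset (Fin n)) = {i', j'} := by
      have := congrArg Subtype.val ha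
      simpa [Hv1, Hv2] using this
    have := congrArg Finset.card hset
    rw [Finset.card_singleton, Finset.card_pair h'] at this
    omega

lemma sub_classify {n : ℕ} {x y : HV n} (h : x.1 ⊂ y.1) :
    ∃ i j hij, x = Hv1 i ∧ y = Hv2 i j hij := by
  have hc : x.1.card < y.1.card := Finset.card_lt_card h
  have hx1 : x.1.card = 1 := by rcases x.2 with h1 | h1 <;> rcases y.2 with h2 | h2 <;> omega
  have hy2 : y.1.card = 2 := by rcases x.2 with h1 | h1 <;> rcases y.2 with h2 | h2 <;> omega
  obtain ⟨i, hi⟩ := Finset.card_eq_one.mp hx1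
  have hiy : i ∈ y.1 := h.1 (by simp [hi])
  have hcard : (y.1.erase i).card = 1 := by
    rw [Finset.card_erase_of_mem hiy]; omega
  obtain ⟨j, hj⟩ := Finset.card_eq_one.mp hcard
  have hji : j ≠ i := by
    have : j ∈ y.1.erase i := by simp [hj]
    exact (Finset.mem_erase.mp this).1
  have hy : y.1 = {i, j} := by
    rw [← Finset.insert_erase hiy, hj]
  exact ⟨i, j, fun hh => hji hh.symm, Subtype.ext (by simp [Hv1, hi]),
    Subtype.ext (by simp [Hv2, hy])⟩

lemma edge_classify {n : ℕ} (e : (Hgraph n).edgeSet) : ∃ i j h, e = edgeV i j h := by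
  obtain ⟨q, hq⟩ := e
  induction q using Sym2.ind with
  | _ x y =>
    rcases hq with h | h
    · obtain ⟨i, j, hij, hx, hy⟩ := sub_classify h
      refine ⟨i, j, hij, Subtype.ext ?_⟩
      show s(x, y) = s(Hv1 i, Hv2 i j hij)
      rw [show x = Hv1 i from hx, show y = Hv2 i j hij from hy]
    · obtain ⟨i, j, hij, hy, hx⟩ := sub_classify h
      refine ⟨i, j, hij, Subtype.ext ?_⟩
      show s(x, y) = s(Hv1 i, Hv2 i j hij)
      rw [show x = Hv2 i j hij from hx, show y = Hv1 i from hy, Sym2.eq_swap]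

lemma permEdge_edgeV {n : ℕ} (α : Equiv.Perm (Fin n)) {i j : Fin n} (h : i ≠ j) :
    permEdge α (edgeV i j h) =
      edgeV (α i) (α j) (fun hh => h (α.injective hh)) := by
  apply Subtype.ext
  show Sym2.map (permHom α) s(Hv1 i, Hv2 i j h) = s(Hv1 (α i), Hv2 (α i) (α j) _)
  rw [Sym2.map_pair_eq]
  have h1 : (permHom α) (Hv1 i) = Hv1 (α i) :=
    Subtype.ext (by show Finset.image ⇑α {i} = {α i}; simp)
  have h2 : (permHom α) (Hv2 i j h) = Hv2 (α i) (α j) (fun hh => h (α.injective hh)) :=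
    Subtype.ext (by show Finset.image ⇑α {i, j} = {α i, α j}; simp [Finset.image_insert])
  rw [h1, h2]

lemma exists_perm_fix {n : ℕ} {x1 i j i' j' : Fin n} (hi : i ≠ x1) (hj : j ≠ x1)
    (hi' : i' ≠ x1) (hj' : j' ≠ x1) (hij : i ≠ j) (hij' : i' ≠ j') :
    ∃ α : Equiv.Perm (Fin n), α x1 = x1 ∧ α i = i' ∧ α j = j' := by
  set σ1 := Equiv.swap i i' with hσ1
  have hσx : σ1 x1 = x1 := Equiv.swap_apply_of_ne_of_ne (Ne.symm hi) (Ne.symm hi')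
  have hσi : σ1 i = i' := Equiv.swap_apply_left i i'
  set k := σ1 j with hk
  have hk1 : k ≠ x1 := fun hh => hj (σ1.injective (show σ1 j = σ1 x1 from hh.trans hσx.symm))
  have hki' : k ≠ i' := fun hh => hij (σ1.injective (show σ1 j = σ1 i from hh.trans hσi.symm)).symm
  set σ2 := Equiv.swap k j' with hσ2
  refine ⟨σ1.trans σ2, ?_, ?_, ?_⟩
  · show σ2 (σ1 x1) = x1
    rw [hσx]
    exact Equiv.swap_apply_of_ne_of_ne (Ne.symm hk1) (Ne.symm hj')
  · show σ2 (σ1 i) = i'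
    rw [hσi]
    exact Equiv.swap_apply_of_ne_of_ne (Ne.symm hki') hij'
  · show σ2 (σ1 j) = j'
    exact Equiv.swap_apply_left k j'

/-- The subgroup of automorphisms of `L(n)` induced by permutations fixing `x1` has exactly
three orbits: `O₁ = {[x1, x1 i]}`, `O₂ = {[i, x1 i]}`, `O₃ = {[i,ij] : i, j ≠ x1}`.
Each of the three sets is invariant and the induced action is transitive on each of them,
and they partition the vertex set. -/
theorem stabilizer_three_orbits (n : ℕ) (hn : 4 ≤ n) (x1 : Fin n)
    (O₁ O₂ O₃ : Set ((Hgraph n).edgeSet))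
    (hO₁ : O₁ = {e | ∃ i, ∃ hi : x1 ≠ i, e = edgeV x1 i hi})
    (hO₂ : O₂ = {e | ∃ i, ∃ hi : i ≠ x1, e = edgeV i x1 hi})
    (hO₃ : O₃ = {e | ∃ i j, i ≠ x1 ∧ j ≠ x1 ∧ ∃ hij : i ≠ j, e = edgeV i j hij}) :
    (O₁ ∪ O₂ ∪ O₃ = Set.univ) ∧
    (O₁ ∩ O₂ = ∅ ∧ O₁ ∩ O₃ = ∅ ∧ O₂ ∩ O₃ = ∅) ∧
    (∀ O ∈ ({O₁, O₂, O₃} : Set (Set ((Hgraph n).edgeSet))),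
      (∀ α : Equiv.Perm (Fin n), α x1 = x1 → ∀ e ∈ O, permEdge α e ∈ O) ∧
      (∀ e ∈ O, ∀ e' ∈ O, ∃ α : Equiv.Perm (Fin n), α x1 = x1 ∧ permEdge α e = e')) := by
  subst hO₁ hO₂ hO₃
  refine ⟨?_, ⟨?_, ?_, ?_⟩, ?_⟩
  · -- union
    ext e
    simp only [Set.mem_union, Set.mem_setOf_eq, Set.mem_univ, iff_true]
    obtain ⟨i, j, h, rfl⟩ := edge_classify e
    by_cases hi : i = x1
    · subst hi
      exact Or.inl (Or.inl ⟨j, h, rfl⟩)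
    · by_cases hj : j = x1
      · subst hj
        exact Or.inl (Or.inr ⟨i, h, rfl⟩)
      · exact Or.inr ⟨i, j, hi, hj, h, rfl⟩
  · ext e
    simp only [Set.mem_inter_iff, Set.mem_setOf_eq, Set.mem_empty_iff_false, iff_false,
      not_and]
    rintro ⟨i, hi, rfl⟩ ⟨i', hi', he⟩
    exact hi' (edgeV_inj he).1.symm
  · ext e
    simp only [Set.mem_inter_iff, Set.mem_setOf_eq, Set.mem_empty_iff_false, iff_false,
      not_and]
    rintro ⟨i, hi, rfl⟩ ⟨i', j', hi', hj', hij', he⟩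
    exact hi' (edgeV_inj he).1.symm
  · ext e
    simp only [Set.mem_inter_iff, Set.mem_setOf_eq, Set.mem_empty_iff_false, iff_false,
      not_and]
    rintro ⟨i, hi, rfl⟩ ⟨i', j', hi', hj', hij', he⟩
    exact hj' (edgeV_inj he).2.symm
  · rintro O (rfl | rfl | rfl)
    · constructor
      · rintro α hα e ⟨i, hi, rfl⟩
        refine ⟨α i, fun hh => hi (α.injective (hα.trans hh)), ?_⟩
        · rw [permEdge_edgeV]
          exact edgeV_congr _ _ hα rfl
      · rintro e ⟨i, hi, rfl⟩ e' ⟨i', hi', rfl⟩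
        refine ⟨Equiv.swap i i', Equiv.swap_apply_of_ne_of_ne hi hi', ?_⟩
        rw [permEdge_edgeV]
        exact edgeV_congr _ _ (Equiv.swap_apply_of_ne_of_ne hi hi')
          (Equiv.swap_apply_left i i')
    · constructor
      · rintro α hα e ⟨i, hi, rfl⟩
        refine ⟨α i, fun hh => hi (α.injective (hh.trans hα.symm)), ?_⟩
        rw [permEdge_edgeV]
        exact edgeV_congr _ _ rfl hα
      · rintro e ⟨i, hi, rfl⟩ e' ⟨i', hi', rfl⟩
        refine ⟨Equiv.swap i i', Equiv.swap_apply_of_ne_of_ne (Ne.symm hi) (Ne.symm hi'), ?_⟩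
        rw [permEdge_edgeV]
        exact edgeV_congr _ _ (Equiv.swap_apply_left i i')
          (Equiv.swap_apply_of_ne_of_ne (Ne.symm hi) (Ne.symm hi'))
    · constructor
      · rintro α hα e ⟨i, j, hi, hj, hij, rfl⟩
        refine ⟨α i, α j, fun hh => hi (α.injective (hh.trans hα.symm)),
          fun hh => hj (α.injective (hh.trans hα.symm)),
          fun hh => hij (α.injective hh), ?_⟩
        rw [permEdge_edgeV]
      · rintro e ⟨i, j, hi, hj, hij, rfl⟩ e' ⟨i', j', hi', hj', hij', rfl⟩
        obtain ⟨α, hα, hαi, hαj⟩ := exists_perm_fix hi hj hi' hj' hij hij'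
        refine ⟨α, hα, ?_⟩
        rw [permEdge_edgeV]
        exact edgeV_congr _ _ hαi hαj
end
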